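/- Let (Σ, T) be a finite convergent length-reducing rewriting system with Σ = Σ^{-1} presenting a group G. If u_0, u_1, ..., u_m = u_0 is an isometrically embedded circuit in Γ(G, Σ) of length m > 2, then m = 2n+1 is odd and, setting x_i = u_{i-1}^{-1} u_i ∈ Σ, the pair (x_1 ⋯ x_{n+1}, x_m^{-1} ⋯ x_{n+2}^{-1}) is a rule in T. -/

import Mathlib

/-- A graph is geodetic if between any two vertices there is a unique shortest walk
(equivalently, a unique shortest path). -/
def IsGeodetic {V : Type*} (G : SimpleGraph V) : Prop :=
  ∀ u v : V, ∃! p : G.Walk u v, ∀ q : G.Walk u v, p.length ≤ q.length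

/-- `c : ZMod n → V` is an embedded circuit of length `n`: the vertices are distinct and
cyclically consecutive vertices are adjacent. -/
def IsEmbCircuit {V : Type*} (G : SimpleGraph V) (n : ℕ) (c : ZMod n → V) : Prop :=
  2 ≤ n ∧ Function.Injective c ∧ ∀ i : ZMod n, G.Adj (c i) (c (i + 1))

/-- An embedded circuit is isometrically embedded if the graph distance between any two of its
vertices equals the cyclic distance `min {j-i, n+i-j}` along the circuit. -/
def IsIEC {V : Type*} (G : SimpleGraph V) (n : ℕ) (c : ZMod n → V) : Prop :=
  IsEmbCircuit G n c ∧ ∀ i j : ZMod n, G.dist (c i) (c j) = min (j - i).val (i - j).val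

/-- One-step rewriting: replace a factor which is a left-hand side of a rule. -/
def RWStep {α : Type*} (T : Set (FreeMonoid α × FreeMonoid α)) (u v : FreeMonoid α) : Prop :=
  ∃ x y l r, (l, r) ∈ T ∧ u = x * l * y ∧ v = x * r * y

/-- Reflexive-transitive closure of one-step rewriting. -/
def RWReduces {α : Type*} (T : Set (FreeMonoid α × FreeMonoid α)) :
    FreeMonoid α → FreeMonoid α → Prop :=
  Relation.ReflTransGen (RWStep T)

/-- Terminating: no infinite chain of immediate reductions. -/
def RWTerminating {α : Type*} (T : Set (FreeMonoid α × FreeMonoid α)) : Prop :=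
  ¬ ∃ f : ℕ → FreeMonoid α, ∀ n : ℕ, RWStep T (f n) (f (n + 1))

/-- Confluent rewriting system. -/
def RWConfluent {α : Type*} (T : Set (FreeMonoid α × FreeMonoid α)) : Prop :=
  ∀ w x y, RWReduces T w x → RWReduces T w y →
    ∃ z, RWReduces T x z ∧ RWReduces T y z

/-- Length-reducing: every rule strictly decreases length. -/
def RWLengthReducing {α : Type*} (T : Set (FreeMonoid α × FreeMonoid α)) : Prop :=
  ∀ p ∈ T, (Prod.snd p).length < (Prod.fst p).length

/-- A word is irreducible if no rewriting step applies to it. -/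
def RWIrreducible {α : Type*} (T : Set (FreeMonoid α × FreeMonoid α)) (u : FreeMonoid α) : Prop :=
  ∀ v, ¬ RWStep T u v

/-- The congruence on `Σ*` generated by the rewriting rules. -/
def RWCon {α : Type*} (T : Set (FreeMonoid α × FreeMonoid α)) : Con (FreeMonoid α) :=
  conGen (RWStep T)

/-- The monoid presented by the rewriting system `(Σ, T)`. -/
abbrev RWMonoid {α : Type*} (T : Set (FreeMonoid α × FreeMonoid α)) :=
  (RWCon T).Quotient

/-- The class of a word in the presented monoid. -/
def RWclass {α : Type*} (T : Set (FreeMonoid α × FreeMonoid α)) (w : FreeMonoid α) :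
    RWMonoid T :=
  Con.mk' (RWCon T) w

/-- The undirected Cayley graph of a group `G` with respect to a set `S`:
distinct `g, h` are adjacent iff `g⁻¹ * h ∈ S ∪ S⁻¹`. -/
def CayleyGraph (G : Type*) [Group G] (S : Set G) : SimpleGraph G where
  Adj g h := g ≠ h ∧ g⁻¹ * h ∈ S ∪ S⁻¹
  symm := by
    refine ⟨?_⟩
    rintro g h ⟨hne, hm⟩
    refine ⟨hne.symm, ?_⟩
    have h2 : (g⁻¹ * h)⁻¹ ∈ S ∪ S⁻¹ := by
      rcases hm with hm | hm
      · exact Or.inr (by simpa using hm)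
      · exact Or.inl (by simpa using hm)
    simpa [mul_inv_rev] using h2
  loopless := ⟨fun g hg => hg.1 rfl⟩


namespace Stmt17Aux
variable {α : Type*} {T : Set (FreeMonoid α × FreeMonoid α)}

theorem step_mul {u v : FreeMonoid α} (p q : FreeMonoid α) (h : RWStep T u v) :
    RWStep T (p * u * q) (p * v * q) := by
  obtain ⟨x, y, l, r, hT, hu, hv⟩ := h
  exact ⟨p * x, y * q, l, r, hT, by rw [hu]; simp [mul_assoc], by rw [hv]; simp [mul_assoc]⟩

theorem reduces_mul {u v u' v' : FreeMonoid α} (h : RWReduces T u u') (h2 : RWReduces T v v') :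
    RWReduces T (u * v) (u' * v') := by
  have s1 : RWReduces T (u * v) (u' * v) :=
    Relation.ReflTransGen.lift (p := RWStep T) (· * v) (fun a b hab => by simpa [Function.onFun] using step_mul 1 v hab) _ _ h
  have s2 : RWReduces T (u' * v) (u' * v') :=
    Relation.ReflTransGen.lift (p := RWStep T) (u' * ·) (fun a b hab => by simpa [Function.onFun, mul_assoc] using step_mul u' 1 hab) _ _ h2
  exact s1.trans s2

def conJ (T : Set (FreeMonoid α × FreeMonoid α)) (hconf : RWConfluent T) : Con (FreeMonoid α) where
  r u v := ∃ z, RWReduces T u z ∧ RWReduces T v z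
  iseqv := by
    refine ⟨fun u => ⟨u, .refl, .refl⟩, ?_, ?_⟩
    · rintro u v ⟨z, h1, h2⟩; exact ⟨z, h2, h1⟩
    · rintro u v w ⟨z1, h1, h2⟩ ⟨z2, h3, h4⟩
      obtain ⟨z, hz1, hz2⟩ := hconf v z1 z2 h2 h3
      exact ⟨z, h1.trans hz1, h4.trans hz2⟩
  mul' := by
    rintro a b cc d ⟨z1, h1, h2⟩ ⟨z2, h3, h4⟩
    exact ⟨z1 * z2, reduces_mul h1 h3, reduces_mul h2 h4⟩

theorem joinable_of_class_eq (hconf : RWConfluent T) {u v : FreeMonoid α}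
    (h : RWclass T u = RWclass T v) : ∃ z, RWReduces T u z ∧ RWReduces T v z := by
  have hcon : RWCon T u v := by
    have := (Con.eq (RWCon T) (a := u) (b := v)).mp
    apply this
    simpa [RWclass] using h
  exact (Con.conGen_le (c := conJ T hconf)).mpr
    (fun x y hxy => ⟨y, Relation.ReflTransGen.single hxy, Relation.ReflTransGen.refl⟩) hcon

theorem eq_of_irr_reduces {u v : FreeMonoid α} (hu : RWIrreducible T u)
    (h : RWReduces T u v) : u = v := by
  rcases h.cases_head with h | ⟨c, hc, _⟩
  · exact h
  · exact absurd hc (hu c)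

theorem irr_unique (hconf : RWConfluent T) {u v : FreeMonoid α} (hu : RWIrreducible T u)
    (hv : RWIrreducible T v) (h : RWclass T u = RWclass T v) : u = v := by
  obtain ⟨z, h1, h2⟩ := joinable_of_class_eq hconf h
  rw [eq_of_irr_reduces hu h1, eq_of_irr_reduces hv h2]

theorem length_lt_of_step (hlr : RWLengthReducing T) {u v : FreeMonoid α}
    (h : RWStep T u v) : v.length < u.length := by
  obtain ⟨x, y, l, r, hT, hu, hv⟩ := h
  have := hlr _ hT
  simp only [hu, hv, FreeMonoid.length_mul] at *
  omega

theorem class_eq_of_step {u v : FreeMonoid α} (h : RWStep T u v) :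
    RWclass T u = RWclass T v := by
  have : RWCon T u v := ConGen.Rel.of _ _ h
  simpa [RWclass] using (Con.eq (RWCon T)).mpr this

end Stmt17Aux

namespace Stmt17Graph
variable {A : Type*} {G : Type*} [Group G]

theorem exists_walk (φ : FreeMonoid A →* G) (w : List A) (g : G) :
    ∃ p : (CayleyGraph G (Set.range fun a : A => φ (FreeMonoid.of a))).Walk
      g (g * φ (FreeMonoid.ofList w)), p.length ≤ w.length := by
  induction w generalizing g with
  | nil => exact ⟨SimpleGraph.Walk.nil.copy rfl (by simp), by simp⟩
  | cons a t ih =>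
    obtain ⟨p, hp⟩ := ih (g * φ (FreeMonoid.of a))
    have hend : g * φ (FreeMonoid.of a) * φ (FreeMonoid.ofList t)
        = g * φ (FreeMonoid.ofList (a :: t)) := by
      have : FreeMonoid.ofList (a :: t) = FreeMonoid.of a * FreeMonoid.ofList t := by
        rw [← FreeMonoid.ofList_singleton, ← FreeMonoid.ofList_append]; rfl
      rw [this, map_mul, mul_assoc]
    by_cases h1 : φ (FreeMonoid.of a) = 1
    · refine ⟨p.copy (by rw [h1, mul_one]) (by rw [hend]), ?_⟩
      rw [SimpleGraph.Walk.length_copy]; simpa using hp.trans (Nat.le_succ _)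
    · have hadj : (CayleyGraph G (Set.range fun a : A => φ (FreeMonoid.of a))).Adj
          g (g * φ (FreeMonoid.of a)) := by
        refine ⟨fun hh => h1 ?_, Or.inl ⟨a, by simp⟩⟩
        have := hh.symm
        rwa [mul_eq_left] at this
      exact ⟨SimpleGraph.Walk.cons hadj (p.copy rfl hend), by rw [SimpleGraph.Walk.length_cons, SimpleGraph.Walk.length_copy]; simpa using Nat.succ_le_succ hp⟩

theorem dist_le_length (φ : FreeMonoid A →* G) (w : FreeMonoid A) (g h : G)
    (hw : φ w = g⁻¹ * h) :
    (CayleyGraph G (Set.range fun a : A => φ (FreeMonoid.of a))).dist g h ≤ w.length := by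
  obtain ⟨p, hp⟩ := exists_walk φ w.toList g
  have he : g * φ (FreeMonoid.ofList w.toList) = h := by
    rw [FreeMonoid.ofList_toList, hw, mul_inv_cancel_left]
  exact le_trans (SimpleGraph.dist_le (p.copy rfl he)) (by rw [SimpleGraph.Walk.length_copy]; exact hp)

theorem phi_ofFn (φ : FreeMonoid A →* G) (len : ℕ) (f : ℕ → A) (v : ℕ → G)
    (h : ∀ k < len, φ (FreeMonoid.of (f k)) = (v k)⁻¹ * v (k + 1)) :
    φ (FreeMonoid.ofList (List.ofFn fun k : Fin len => f k)) = (v 0)⁻¹ * v len := by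
  induction len with
  | zero => simp
  | succ n ih =>
    rw [List.ofFn_succ', List.concat_eq_append, FreeMonoid.ofList_append, map_mul]
    simp only [Fin.coe_castSucc, Fin.val_last]
    rw [ih (fun k hk => h k (by omega)), FreeMonoid.ofList_singleton, h n (by omega)]
    group

end Stmt17Graph
theorem stmt17 {A : Type} [Fintype A] (T : Set (FreeMonoid A × FreeMonoid A))
    (hT : T.Finite) (hterm : RWTerminating T) (hconf : RWConfluent T)
    (hlr : RWLengthReducing T) (G : Type*) [Group G] (e : RWMonoid T ≃* G)
    (hinv : ∀ a : A, ∃ b : A,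
      e (RWclass T (FreeMonoid.of b)) = (e (RWclass T (FreeMonoid.of a)))⁻¹)
    (m : ℕ) (c : ZMod m → G) (hm : 2 < m)
    (hc : IsIEC (CayleyGraph G (Set.range fun a : A => e (RWclass T (FreeMonoid.of a)))) m c) :
    ∃ n : ℕ, m = 2 * n + 1 ∧ ∃ w₁ w₂ : FreeMonoid A, (w₁, w₂) ∈ T ∧
      w₁.length = n + 1 ∧ w₂.length = n ∧
      (∀ (k : ℕ) (hk : k < w₁.toList.length),
        e (RWclass T (FreeMonoid.of (w₁.toList.get ⟨k, hk⟩))) =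
          (c (k : ZMod m))⁻¹ * c ((k + 1 : ℕ) : ZMod m)) ∧
      (∀ (k : ℕ) (hk : k < w₂.toList.length),
        e (RWclass T (FreeMonoid.of (w₂.toList.get ⟨k, hk⟩))) =
          (c ((m - k : ℕ) : ZMod m))⁻¹ * c ((m - k - 1 : ℕ) : ZMod m)) := by
  classical
  haveI : NeZero m := ⟨by omega⟩
  obtain ⟨⟨hm2, hcinj, hadj⟩, hdist0⟩ := hc
  let Φ : FreeMonoid A →* G := e.toMonoidHom.comp (Con.mk' (RWCon T))
  have hΦ : ∀ w, Φ w = e (RWclass T w) := fun w => rfl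
  have hSeq : (Set.range fun a : A => Φ (FreeMonoid.of a))
      = (Set.range fun a : A => e (RWclass T (FreeMonoid.of a))) := rfl
  -- distance formula
  have hdist : ∀ i j : ℕ, i ≤ j → j - i < m →
      (CayleyGraph G (Set.range fun a : A => e (RWclass T (FreeMonoid.of a)))).dist
        (c i) (c j) = min (j - i) (m - (j - i)) := by
    intro i j h1 h2
    rw [hdist0 (i : ZMod m) (j : ZMod m)]
    rcases Nat.eq_or_lt_of_le h1 with rfl | hlt
    · simp
    · have hv1 : ((j : ZMod m) - i).val = j - i := by
        rw [← Nat.cast_sub h1, ZMod.val_cast_of_lt h2]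
      have hv2 : ((i : ZMod m) - j).val = m - (j - i) := by
        have e1 : ((i : ZMod m) - j) = ((m - (j - i) : ℕ) : ZMod m) := by
          rw [Nat.cast_sub (le_of_lt h2), Nat.cast_sub h1, ZMod.natCast_self]; ring
        rw [e1, ZMod.val_cast_of_lt (by omega)]
      rw [hv1, hv2]
  -- letters along the circuit
  have hletter : ∀ i : ZMod m, ∃ a : A, Φ (FreeMonoid.of a) = (c i)⁻¹ * c (i + 1) := by
    intro i
    rcases (hadj i).2 with ⟨a, ha⟩ | hmem
    · exact ⟨a, ha⟩
    · rw [Set.mem_inv] at hmem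
      obtain ⟨a, ha⟩ := hmem
      obtain ⟨b, hb⟩ := hinv a
      refine ⟨b, ?_⟩
      have : Φ (FreeMonoid.of b) = (Φ (FreeMonoid.of a))⁻¹ := hb
      rw [this, show Φ (FreeMonoid.of a) = ((c i)⁻¹ * c (i + 1))⁻¹ from ha, inv_inv]
  choose aZ haZ using hletter
  have hletterinv : ∀ i : ZMod m, ∃ b : A, Φ (FreeMonoid.of b) = (c (i + 1))⁻¹ * c i := by
    intro i
    obtain ⟨b, hb⟩ := hinv (aZ i)
    refine ⟨b, ?_⟩
    have : Φ (FreeMonoid.of b) = (Φ (FreeMonoid.of (aZ i)))⁻¹ := hb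
    rw [this, haZ, mul_inv_rev, inv_inv]
  choose bZ hbZ using hletterinv
  set aN : ℕ → A := fun k => aZ (k : ZMod m) with haNdef
  have haN : ∀ k : ℕ, Φ (FreeMonoid.of (aN k))
      = (c (k : ZMod m))⁻¹ * c ((k + 1 : ℕ) : ZMod m) := by
    intro k
    have h1 : ((k + 1 : ℕ) : ZMod m) = (k : ZMod m) + 1 := by push_cast; ring
    rw [h1]; exact haZ (k : ZMod m)
  set bN : ℕ → A := fun k => bZ ((m - 1 - k : ℕ) : ZMod m) with hbNdef
  have hbN : ∀ k : ℕ, k < m → Φ (FreeMonoid.of (bN k))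
      = (c ((m - k : ℕ) : ZMod m))⁻¹ * c ((m - k - 1 : ℕ) : ZMod m) := by
    intro k hk
    have h1 : ((m - 1 - k : ℕ) : ZMod m) + 1 = ((m - k : ℕ) : ZMod m) := by
      rw [show m - k = m - 1 - k + 1 from by omega]; push_cast; ring
    have h2 : (m - k - 1 : ℕ) = (m - 1 - k : ℕ) := by omega
    rw [h2, ← h1]
    exact hbZ ((m - 1 - k : ℕ) : ZMod m)
  -- words
  have hF : ∀ len : ℕ, Φ (FreeMonoid.ofList (List.ofFn fun k : Fin len => aN k))
      = (c 0)⁻¹ * c ((len : ℕ) : ZMod m) := by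
    intro len
    have := Stmt17Graph.phi_ofFn Φ len aN (fun k => c ((k : ℕ) : ZMod m))
      (fun k _ => haN k)
    simpa using this
  have hB : ∀ len : ℕ, len ≤ m → Φ (FreeMonoid.ofList (List.ofFn fun k : Fin len => bN k))
      = (c 0)⁻¹ * c ((m - len : ℕ) : ZMod m) := by
    intro len hlen
    have := Stmt17Graph.phi_ofFn Φ len bN (fun k => c ((m - k : ℕ) : ZMod m))
      (fun k hk => by rw [hbN k (by omega)]; rw [Nat.sub_sub])
    simpa [ZMod.natCast_self] using this
  -- geodesic words are irreducible
  have hgeo : ∀ (L : List A) (g h : G), Φ (FreeMonoid.ofList L) = g⁻¹ * h →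
      (CayleyGraph G (Set.range fun a : A => e (RWclass T (FreeMonoid.of a)))).dist g h
        = L.length → RWIrreducible T (FreeMonoid.ofList L) := by
    intro L g h hw hlen v hv
    have hcls := Stmt17Aux.class_eq_of_step hv
    have hφv : Φ v = g⁻¹ * h := by
      rw [hΦ, ← hcls, ← hΦ, hw]
    have h1 := Stmt17Graph.dist_le_length Φ v g h hφv
    rw [hSeq] at h1
    have h2 := Stmt17Aux.length_lt_of_step hlr hv
    have h3 : (FreeMonoid.ofList L).length = L.length := rfl
    omega
  have hclassΦ : ∀ u v : FreeMonoid A, Φ u = Φ v → RWclass T u = RWclass T v :=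
    fun u v h => e.injective h
  rcases Nat.even_or_odd m with ⟨n, hmn⟩ | ⟨n, hmn⟩
  · -- even case: contradiction
    exfalso
    have hn2 : 2 ≤ n := by omega
    have hFgeo : RWIrreducible T (FreeMonoid.ofList (List.ofFn fun k : Fin n => aN k)) := by
      refine hgeo _ (c 0) (c ((n : ℕ) : ZMod m)) (hF n) ?_
      have := hdist 0 n (by omega) (by omega)
      simp only [Nat.cast_zero, Nat.sub_zero] at this
      rw [this, show m - n = n from by omega, min_self, List.length_ofFn]
    have hBgeo : RWIrreducible T (FreeMonoid.ofList (List.ofFn fun k : Fin n => bN k)) := by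
      refine hgeo _ (c 0) (c ((n : ℕ) : ZMod m)) ?_ ?_
      · rw [hB n (by omega), show m - n = n from by omega]
      · have := hdist 0 n (by omega) (by omega)
        simp only [Nat.cast_zero, Nat.sub_zero] at this
        rw [this, show m - n = n from by omega, min_self, List.length_ofFn]
    have heq : (FreeMonoid.ofList (List.ofFn fun k : Fin n => aN k))
        = FreeMonoid.ofList (List.ofFn fun k : Fin n => bN k) := by
      refine Stmt17Aux.irr_unique hconf hFgeo hBgeo (hclassΦ _ _ ?_)
      rw [hF n, hB n (by omega), show m - n = n from by omega]
    have hlists : (List.ofFn fun k : Fin n => aN k) = List.ofFn fun k : Fin n => bN k :=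
      congrArg FreeMonoid.toList heq
    have hfun := List.ofFn_inj.mp hlists
    have h0 : aN 0 = bN 0 := congrFun hfun ⟨0, by omega⟩
    have hΦ0 : Φ (FreeMonoid.of (aN 0)) = Φ (FreeMonoid.of (bN 0)) := by rw [h0]
    rw [haN 0, hbN 0 (by omega)] at hΦ0
    simp only [Nat.cast_zero, Nat.sub_zero, ZMod.natCast_self, Nat.cast_one] at hΦ0
    have hc1 : c ((1 : ℕ) : ZMod m) = c ((m - 1 : ℕ) : ZMod m) := by
      have := mul_left_cancel hΦ0
      simpa using this
    have := hcinj hc1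
    have hval := congrArg ZMod.val this
    rw [ZMod.val_cast_of_lt (by omega : (1:ℕ) < m),
      ZMod.val_cast_of_lt (by omega : m - 1 < m)] at hval
    omega
  · -- odd case: m = 2 * n + 1
    have hn1 : 1 ≤ n := by omega
    refine ⟨n, hmn, ?_⟩
    set W : List A := List.ofFn (fun k : Fin (n + 1) => aN k) with hWdef
    set P : List A := List.ofFn (fun k : Fin n => aN k) with hPdef
    set Sf : List A := List.ofFn (fun k : Fin n => aN (k + 1)) with hSfdef
    set Bn : List A := List.ofFn (fun k : Fin n => bN k) with hBndef
    -- distances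
    have hd1 : (CayleyGraph G (Set.range fun a : A => e (RWclass T (FreeMonoid.of a)))).dist
        (c 0) (c ((n + 1 : ℕ) : ZMod m)) = n := by
      have := hdist 0 (n + 1) (by omega) (by omega)
      simp only [Nat.cast_zero, Nat.sub_zero] at this
      rw [this]; omega
    have hd2 : (CayleyGraph G (Set.range fun a : A => e (RWclass T (FreeMonoid.of a)))).dist
        (c 0) (c ((n : ℕ) : ZMod m)) = n := by
      have := hdist 0 n (by omega) (by omega)
      simp only [Nat.cast_zero, Nat.sub_zero] at this
      rw [this]; omega
    have hd3 : (CayleyGraph G (Set.range fun a : A => e (RWclass T (FreeMonoid.of a)))).dist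
        (c ((1 : ℕ) : ZMod m)) (c ((n + 1 : ℕ) : ZMod m)) = n := by
      have := hdist 1 (n + 1) (by omega) (by omega)
      rw [this]; omega
    -- values of words
    have hWval : Φ (FreeMonoid.ofList W) = (c 0)⁻¹ * c ((n + 1 : ℕ) : ZMod m) := by
      rw [hWdef]; exact hF (n + 1)
    have hPval : Φ (FreeMonoid.ofList P) = (c 0)⁻¹ * c ((n : ℕ) : ZMod m) := by
      rw [hPdef]; exact hF n
    have hBval : Φ (FreeMonoid.ofList Bn) = (c 0)⁻¹ * c ((n + 1 : ℕ) : ZMod m) := by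
      rw [hBndef, hB n (by omega), show m - n = n + 1 from by omega]
    have hSfval : Φ (FreeMonoid.ofList Sf) = (c ((1 : ℕ) : ZMod m))⁻¹ * c ((n + 1 : ℕ) : ZMod m) := by
      rw [hSfdef]
      have := Stmt17Graph.phi_ofFn Φ n (fun k => aN (k + 1))
        (fun k => c ((k + 1 : ℕ) : ZMod m)) (fun k _ => haN (k + 1))
      simpa using this
    -- irreducibility of the three geodesic words
    have hBirr : RWIrreducible T (FreeMonoid.ofList Bn) :=
      hgeo _ _ _ hBval (by rw [hd1, hBndef, List.length_ofFn])
    have hPirr : RWIrreducible T (FreeMonoid.ofList P) :=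
      hgeo _ _ _ hPval (by rw [hd2, hPdef, List.length_ofFn])
    have hSfirr : RWIrreducible T (FreeMonoid.ofList Sf) :=
      hgeo _ _ _ hSfval (by rw [hd3, hSfdef, List.length_ofFn])
    -- W is reducible
    have hWBcls : RWclass T (FreeMonoid.ofList W) = RWclass T (FreeMonoid.ofList Bn) :=
      hclassΦ _ _ (by rw [hWval, hBval])
    have hred : ¬ RWIrreducible T (FreeMonoid.ofList W) := by
      intro hirr
      have := Stmt17Aux.irr_unique hconf hirr hBirr hWBcls
      have hlen := congrArg FreeMonoid.length this
      simp only [hWdef, hBndef] at hlen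
      have : (FreeMonoid.ofList (List.ofFn fun k : Fin (n+1) => aN k)).length = n + 1 := by
        show (List.ofFn fun k : Fin (n+1) => aN k).length = n + 1
        rw [List.length_ofFn]
      have h2 : (FreeMonoid.ofList (List.ofFn fun k : Fin n => bN k)).length = n := by
        show (List.ofFn fun k : Fin n => bN k).length = n
        rw [List.length_ofFn]
      omega
    simp only [RWIrreducible, not_forall, not_not] at hred
    obtain ⟨v, x, y, l, r, hTlr, hu, hvdef⟩ := hred
    have hW : W = x.toList ++ l.toList ++ y.toList := by
      have := congrArg FreeMonoid.toList hu
      simpa [FreeMonoid.toList_mul, FreeMonoid.toList_ofList] using this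
    -- decompositions of W
    have hWcons : W = aN 0 :: Sf := by
      rw [hWdef, hSfdef, List.ofFn_succ]
      congr 1
    have hWlast : W = P ++ [aN n] := by
      rw [hWdef, hPdef, List.ofFn_succ', List.concat_eq_append]
      congr 1
    -- x must be empty
    have hx : x.toList = [] := by
      by_contra hxne
      obtain ⟨hd, tl, hxcons⟩ := List.exists_cons_of_ne_nil hxne
      rw [hWcons, hxcons] at hW
      simp only [List.cons_append] at hW
      have hSf2 : Sf = tl ++ l.toList ++ y.toList := by
        injection hW with _ h2
      refine hSfirr (FreeMonoid.ofList tl * r * y) ⟨FreeMonoid.ofList tl, y, l, r, hTlr, ?_, rfl⟩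
      rw [hSf2, FreeMonoid.ofList_append, FreeMonoid.ofList_append, FreeMonoid.ofList_toList,
        FreeMonoid.ofList_toList]
    -- y must be empty
    have hy : y.toList = [] := by
      rcases List.eq_nil_or_concat y.toList with h | ⟨y', b, hy'⟩
      · exact h
      exfalso
      rw [List.concat_eq_append] at hy'
      rw [hWlast, hy'] at hW
      have hW2 : (x.toList ++ l.toList ++ y') ++ [b] = P ++ [aN n] := by
        simp only [List.append_assoc] at hW ⊢
        exact hW.symm
      have hP2 := (List.append_inj' hW2 rfl).1
      refine hPirr (x * r * FreeMonoid.ofList y') ⟨x, FreeMonoid.ofList y', l, r, hTlr, ?_, rfl⟩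
      rw [← hP2]
      simp only [FreeMonoid.ofList_append, FreeMonoid.ofList_toList]
    have hx1 : x = 1 := by
      have := congrArg FreeMonoid.ofList hx
      rwa [FreeMonoid.ofList_toList, FreeMonoid.ofList_nil] at this
    have hy1 : y = 1 := by
      have := congrArg FreeMonoid.ofList hy
      rwa [FreeMonoid.ofList_toList, FreeMonoid.ofList_nil] at this
    rw [hx1, hy1, one_mul, mul_one] at hu
    have hrule : (FreeMonoid.ofList W, r) ∈ T := by rw [hu]; exact hTlr
    -- properties of r
    have hWlen : (FreeMonoid.ofList W).length = n + 1 := by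
      show W.length = n + 1
      rw [hWdef, List.length_ofFn]
    have hrlt : r.length < n + 1 := by
      have := hlr _ hrule
      simp only at this
      omega
    have hclsWr : RWclass T (FreeMonoid.ofList W) = RWclass T r :=
      Stmt17Aux.class_eq_of_step ⟨1, 1, FreeMonoid.ofList W, r, hrule, by simp, by simp⟩
    have hΦr : Φ r = (c 0)⁻¹ * c ((n + 1 : ℕ) : ZMod m) := by
      rw [hΦ, ← hclsWr, ← hΦ, hWval]
    have hrge : n ≤ r.length := by
      have := Stmt17Graph.dist_le_length Φ r (c 0) (c ((n + 1 : ℕ) : ZMod m)) hΦr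
      rw [hSeq, hd1] at this
      exact this
    have hrlen : r.length = n := by omega
    have hrirr : RWIrreducible T r := by
      have := hgeo r.toList (c 0) (c ((n + 1 : ℕ) : ZMod m))
        (by rw [FreeMonoid.ofList_toList, hΦr])
        (by rw [hd1]; exact hrlen.symm)
      rwa [FreeMonoid.ofList_toList] at this
    have hreqB : r = FreeMonoid.ofList Bn :=
      Stmt17Aux.irr_unique hconf hrirr hBirr (hclassΦ _ _ (by rw [hΦr, hBval]))
    subst hreqB
    refine ⟨FreeMonoid.ofList W, FreeMonoid.ofList Bn, hrule, hWlen, ?_, ?_, ?_⟩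
    · show Bn.length = n
      rw [hBndef, List.length_ofFn]
    · intro k hk
      have hget : (FreeMonoid.ofList W).toList.get ⟨k, hk⟩ = aN k := by
        have h := List.get_ofFn (fun k : Fin (n + 1) => aN k) ⟨k, hk⟩
        exact h
      rw [hget]
      exact haN k
    · intro k hk
      have hkn : k < n := by
        have : (FreeMonoid.ofList Bn).toList.length = n := by
          show Bn.length = n
          rw [hBndef, List.length_ofFn]
        omega
      have hget : (FreeMonoid.ofList Bn).toList.get ⟨k, hk⟩ = bN k := by
        have h := List.get_ofFn (fun k : Fin n => bN k) ⟨k, hk⟩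
        exact h
      rw [hget]
      exact hbN k (by omega)
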